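/- For all X ∈ (0, 1/2] and Y ∈ ℝ with Σ_{n∈ℤ}(n−Y)e^{−π(n−Y)²/X} ≠ 0, we have |Σ_{n∈ℤ}(n−Y)³ e^{−π(n−Y)²/X}| ≤ (1/4)·|Σ_{n∈ℤ}(n−Y) e^{−π(n−Y)²/X}|. -/

import Mathlib

open Real

set_option maxHeartbeats 1000000
open Filter Set

namespace CQB


lemma exp5_gt : (148.41 : ℝ) < Real.exp 5 := by
  have h := Real.exp_one_gt_d9
  have h5 : Real.exp 5 = (Real.exp 1)^5 := by
    rw [← Real.exp_nat_mul]; norm_num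
  rw [h5]
  nlinarith [Real.exp_pos 1, pow_pos (Real.exp_pos 1) 2, pow_pos (Real.exp_pos 1) 3,
    pow_pos (Real.exp_pos 1) 4]

/-- a * exp(-β a) is decreasing for a ≥ a₀ ≥ 1/β -/
lemma mul_exp_decreasing {a₀ β a : ℝ} (ha₀ : 0 < a₀) (hβ : 1 ≤ β * a₀) (ha : a₀ ≤ a) :
    a * Real.exp (-(β * a)) ≤ a₀ * Real.exp (-(β * a₀)) := by
  have hβpos : 0 < β := by nlinarith
  have h1 : a ≤ a₀ * Real.exp (β * (a - a₀)) := by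
    have he := Real.add_one_le_exp (β * (a - a₀))
    nlinarith
  calc a * Real.exp (-(β * a)) ≤ (a₀ * Real.exp (β * (a - a₀))) * Real.exp (-(β * a)) := by
        nlinarith [Real.exp_pos (-(β * a))]
    _ = a₀ * (Real.exp (β * (a - a₀)) * Real.exp (-(β * a))) := by ring
    _ = a₀ * Real.exp (-(β * a₀)) := by rw [← Real.exp_add]; ring_nf



noncomputable def dom (a d : ℝ) (m : ℕ) : ℝ :=
  (1 + ((m:ℝ) + d)^2)^2 * Real.exp (-(a * ((m:ℝ) + d)^2))

lemma pow4_le_exp (x : ℝ) (hx : 0 ≤ x) : x^4 ≤ 256 * Real.exp x := by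
  have h1 : x/4 ≤ Real.exp (x/4) := (Real.add_one_le_exp (x/4)).trans' (by linarith)
  have h2 : (x/4)^4 ≤ (Real.exp (x/4))^4 := by
    apply pow_le_pow_left₀ (by linarith) h1
  have h3 : (Real.exp (x/4))^4 = Real.exp x := by
    rw [← Real.exp_nat_mul]; ring_nf
  nlinarith [h2, h3]

lemma summable_dom (a d : ℝ) (ha : 6 ≤ a) : Summable (dom a d) := by
  set M : ℕ := ⌈2*|d|⌉₊ + 2 with hM
  rw [← summable_nat_add_iff M]
  have key : ∀ m : ℕ, dom a d (m + M) ≤ 6400 * (Real.exp (-2))^m := by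
    intro m
    set n : ℕ := m + M with hn
    have hn2 : (2:ℝ) ≤ n := by
      have : (2:ℕ) ≤ n := by omega
      exact_mod_cast this
    have hdn : 2*|d| ≤ (n:ℝ) := by
      have h1 : (⌈2*|d|⌉₊ : ℝ) ≤ n := by
        have : ⌈2*|d|⌉₊ ≤ n := by omega
        exact_mod_cast this
      exact (Nat.le_ceil _).trans h1
    have habs := abs_le.1 (le_refl |d|)
    have h1 : (n:ℝ)/2 ≤ (n:ℝ) + d := by
      cases' abs_cases d with h h <;> nlinarith [abs_nonneg d]
    have h2 : (n:ℝ) + d ≤ 2*(n:ℝ) := by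
      cases' abs_cases d with h h <;> nlinarith [abs_nonneg d]
    have h3 : (1:ℝ) ≤ (n:ℝ) + d := by nlinarith
    have hb0 : ((n:ℝ) + d)^2 ≤ 4*(n:ℝ)^2 := by nlinarith
    have hb0' : (1:ℝ) ≤ (n:ℝ)^2 := by nlinarith
    have hb1 : (1 + ((n:ℝ) + d)^2)^2 ≤ 25 * (n:ℝ)^4 := by nlinarith [sq_nonneg ((n:ℝ)+d), sq_nonneg (n:ℝ)]
    have hb2 : (n:ℝ)^4 ≤ 256 * Real.exp n := pow4_le_exp _ (by positivity)
    have hb3 : Real.exp (-(a * ((n:ℝ) + d)^2)) ≤ Real.exp (-(3*(n:ℝ))) := by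
      apply Real.exp_le_exp.2
      nlinarith
    have hb4 : dom a d n ≤ 6400 * Real.exp n * Real.exp (-(3*(n:ℝ))) := by
      unfold dom
      have e1 : (0:ℝ) < Real.exp (-(a * ((n:ℝ) + d)^2)) := Real.exp_pos _
      have e2 : (0:ℝ) ≤ Real.exp n := (Real.exp_pos _).le
      nlinarith
    have hb5 : Real.exp (n:ℝ) * Real.exp (-(3*(n:ℝ))) = (Real.exp (-2))^n := by
      rw [← Real.exp_add, ← Real.exp_nat_mul]; ring_nf
    have hb6 : ((Real.exp (-2))^n : ℝ) ≤ (Real.exp (-2))^m := by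
      apply pow_le_pow_of_le_one (Real.exp_pos _).le
      · exact (Real.exp_lt_one_iff.2 (by norm_num)).le
      · omega
    calc dom a d n ≤ 6400 * ((Real.exp (-2))^n) := by rw [← hb5]; linarith
      _ ≤ 6400 * (Real.exp (-2))^m := by nlinarith [pow_nonneg (Real.exp_pos (-2:ℝ)).le n]
  apply Summable.of_nonneg_of_le ?_ key
  · exact (summable_geometric_of_lt_one (Real.exp_pos _).le
      (Real.exp_lt_one_iff.2 (by norm_num))).mul_left 6400
  · intro m; unfold dom; positivity

lemma summable_of_dom {a : ℝ} (d : ℝ) (ha : 6 ≤ a) {g : ℕ → ℝ}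
    (hb : ∀ m, |g m| ≤ dom a d m) : Summable g :=
  Summable.of_abs (Summable.of_nonneg_of_le (fun m => abs_nonneg _) hb (summable_dom a d ha))



noncomputable def hf (a u : ℝ) : ℝ := (u^3 - u/4) * Real.exp (-(a*u^2))
noncomputable def kf (a u : ℝ) : ℝ := (u^3 + u/4) * Real.exp (-(a*u^2))
noncomputable def phi (a u : ℝ) : ℝ := u^2*(u^2-1/4) * Real.exp (-(a*u^2))
noncomputable def psi (a u : ℝ) : ℝ := u^2*(u^2+1/4) * Real.exp (-(a*u^2))

noncomputable def hder (a u : ℝ) : ℝ := (3*u^2 - 1/4 - 2*a*u^2*(u^2-1/4)) * Real.exp (-(a*u^2))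
noncomputable def kder (a u : ℝ) : ℝ := (3*u^2 + 1/4 - 2*a*u^2*(u^2+1/4)) * Real.exp (-(a*u^2))

lemma exp_part_deriv (a u : ℝ) :
    HasDerivAt (fun v : ℝ => Real.exp (-(a*v^2))) ((-(a*(2*u))) * Real.exp (-(a*u^2))) u := by
  have h1 : HasDerivAt (fun v : ℝ => -(a*v^2)) (-(a*(2*u))) u := by
    simpa [Pi.neg_def] using (((hasDerivAt_pow 2 u).const_mul a).neg)
  simpa [mul_comm] using h1.exp

lemma hf_deriv (a u : ℝ) : HasDerivAt (hf a) (hder a u) u := by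
  have h1 : HasDerivAt (fun v : ℝ => v^3 - v/4) (3*u^2 - 1/4) u := by
    simpa [Pi.sub_def] using ((hasDerivAt_pow 3 u).sub ((hasDerivAt_id u).div_const 4))
  have := h1.mul (exp_part_deriv a u)
  exact this.congr_deriv (by unfold hder; ring)

lemma kf_deriv (a u : ℝ) : HasDerivAt (kf a) (kder a u) u := by
  have h1 : HasDerivAt (fun v : ℝ => v^3 + v/4) (3*u^2 + 1/4) u := by
    simpa [Pi.add_def] using ((hasDerivAt_pow 3 u).add ((hasDerivAt_id u).div_const 4))
  have := h1.mul (exp_part_deriv a u)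
  exact this.congr_deriv (by unfold kder; ring)

lemma hf_cont (a : ℝ) : Continuous (hf a) := by
  unfold hf
  exact ((continuous_pow 3).sub (continuous_id.div_const 4)).mul
    (Real.continuous_exp.comp ((continuous_const.mul (continuous_pow 2)).neg))

lemma kf_cont (a : ℝ) : Continuous (kf a) := by
  unfold kf
  exact ((continuous_pow 3).add (continuous_id.div_const 4)).mul
    (Real.continuous_exp.comp ((continuous_const.mul (continuous_pow 2)).neg))

lemma hf_antitone {a : ℝ} (ha : 6 ≤ a) : AntitoneOn (hf a) (Ici 1) := by
  apply antitoneOn_of_deriv_nonpos (convex_Ici 1) (hf_cont a).continuousOn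
  · intro x hx
    exact (hf_deriv a x).differentiableAt.differentiableWithinAt
  · intro x hx
    rw [interior_Ici] at hx
    rw [(hf_deriv a x).deriv]
    have hx1 : (1:ℝ) < x := hx
    have he : (0:ℝ) < Real.exp (-(a*x^2)) := Real.exp_pos _
    unfold hder
    have hx2 : (1:ℝ) ≤ x^2 := by nlinarith
    have hq : (0:ℝ) ≤ (2*a-12)*(x^2*(x^2-1/4)) := by
      apply mul_nonneg (by linarith)
      apply mul_nonneg (sq_nonneg x) (by nlinarith)
    have hp : 3*x^2 - 1/4 - 2*a*x^2*(x^2-1/4) ≤ 0 := by nlinarith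
    exact mul_nonpos_of_nonpos_of_nonneg hp he.le

lemma kf_antitone {a : ℝ} (ha : 6 ≤ a) : AntitoneOn (kf a) (Ici (3/4)) := by
  apply antitoneOn_of_deriv_nonpos (convex_Ici _) (kf_cont a).continuousOn
  · intro x hx
    exact (kf_deriv a x).differentiableAt.differentiableWithinAt
  · intro x hx
    rw [interior_Ici] at hx
    rw [(kf_deriv a x).deriv]
    have hx1 : (3/4:ℝ) < x := hx
    have he : (0:ℝ) < Real.exp (-(a*x^2)) := Real.exp_pos _
    unfold kder
    have hx2 : (9/16:ℝ) ≤ x^2 := by nlinarith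
    have hq : (0:ℝ) ≤ (2*a-12)*(x^2*(x^2+1/4)) := by
      apply mul_nonneg (by linarith)
      apply mul_nonneg (sq_nonneg x) (by nlinarith)
    have hp : 3*x^2 + 1/4 - 2*a*x^2*(x^2+1/4) ≤ 0 := by nlinarith [sq_nonneg x, sq_nonneg (x^2-1)]
    exact mul_nonpos_of_nonpos_of_nonneg hp he.le

noncomputable def phider (a u : ℝ) : ℝ :=
  (4*u^3 - u/2 - 2*a*u*(u^4 - u^2/4)) * Real.exp (-(a*u^2))
noncomputable def psider (a u : ℝ) : ℝ :=
  (4*u^3 + u/2 - 2*a*u*(u^4 + u^2/4)) * Real.exp (-(a*u^2))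

lemma phi_eq (a u : ℝ) : phi a u = (u^4 - u^2/4) * Real.exp (-(a*u^2)) := by
  unfold phi; ring
lemma psi_eq (a u : ℝ) : psi a u = (u^4 + u^2/4) * Real.exp (-(a*u^2)) := by
  unfold psi; ring

lemma phi_deriv (a u : ℝ) : HasDerivAt (phi a) (phider a u) u := by
  have h1 : HasDerivAt (fun v : ℝ => v^4 - v^2/4) (4*u^3 - 2*u/4) u := by
    simpa [Pi.sub_def] using ((hasDerivAt_pow 4 u).sub ((hasDerivAt_pow 2 u).div_const 4))
  have h2 := h1.mul (exp_part_deriv a u)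
  have h3 : (phi a) = (fun v : ℝ => (v^4 - v^2/4) * Real.exp (-(a*v^2))) := by
    funext v; exact phi_eq a v
  rw [h3]
  exact h2.congr_deriv (by unfold phider; ring)

lemma psi_deriv (a u : ℝ) : HasDerivAt (psi a) (psider a u) u := by
  have h1 : HasDerivAt (fun v : ℝ => v^4 + v^2/4) (4*u^3 + 2*u/4) u := by
    simpa [Pi.add_def] using ((hasDerivAt_pow 4 u).add ((hasDerivAt_pow 2 u).div_const 4))
  have h2 := h1.mul (exp_part_deriv a u)
  have h3 : (psi a) = (fun v : ℝ => (v^4 + v^2/4) * Real.exp (-(a*v^2))) := by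
    funext v; exact psi_eq a v
  rw [h3]
  exact h2.congr_deriv (by unfold psider; ring)

lemma phi_cont (a : ℝ) : Continuous (phi a) := by
  unfold phi
  exact ((continuous_pow 2).mul ((continuous_pow 2).sub continuous_const)).mul
    (Real.continuous_exp.comp ((continuous_const.mul (continuous_pow 2)).neg))

lemma psi_cont (a : ℝ) : Continuous (psi a) := by
  unfold psi
  exact ((continuous_pow 2).mul ((continuous_pow 2).add continuous_const)).mul
    (Real.continuous_exp.comp ((continuous_const.mul (continuous_pow 2)).neg))

lemma phi_antitoneOn {a : ℝ} (ha : 6 ≤ a) : AntitoneOn (phi a) (Ici 1) := by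
  apply antitoneOn_of_deriv_nonpos (convex_Ici 1) (phi_cont a).continuousOn
  · intro x hx
    exact (phi_deriv a x).differentiableAt.differentiableWithinAt
  · intro x hx
    rw [interior_Ici] at hx
    rw [(phi_deriv a x).deriv]
    have hx1 : (1:ℝ) < x := hx
    have he : (0:ℝ) < Real.exp (-(a*x^2)) := Real.exp_pos _
    unfold phider
    have hx2 : (1:ℝ) ≤ x^2 := by nlinarith
    have hx3 : (0:ℝ) ≤ x^3 := by positivity
    have h40 : (0:ℝ) ≤ x^4 - x^2/4 := by nlinarith [mul_nonneg (sq_nonneg x) (by linarith : (0:ℝ) ≤ x^2 - 1)]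
    have hq : (0:ℝ) ≤ (2*a-12)*(x*(x^4 - x^2/4)) := by
      apply mul_nonneg (by linarith)
      exact mul_nonneg (by linarith) h40
    have h57 : 7*x^3 ≤ 7*x^5 := by nlinarith [mul_le_mul_of_nonneg_left hx2 (by linarith : (0:ℝ) ≤ 7*x^3)]
    have hp : 4*x^3 - x/2 - 2*a*x*(x^4 - x^2/4) ≤ 0 := by nlinarith
    exact mul_nonpos_of_nonpos_of_nonneg hp he.le

lemma psi_antitoneOn {a : ℝ} (ha : 6 ≤ a) : AntitoneOn (psi a) (Ici (3/4)) := by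
  apply antitoneOn_of_deriv_nonpos (convex_Ici _) (psi_cont a).continuousOn
  · intro x hx
    exact (psi_deriv a x).differentiableAt.differentiableWithinAt
  · intro x hx
    rw [interior_Ici] at hx
    rw [(psi_deriv a x).deriv]
    have hx1 : (3/4:ℝ) < x := hx
    have he : (0:ℝ) < Real.exp (-(a*x^2)) := Real.exp_pos _
    unfold psider
    have hx0 : (0:ℝ) < x := by linarith
    have hx2 : (9/16:ℝ) ≤ x^2 := by nlinarith
    have hx3 : (0:ℝ) ≤ x^3 := by positivity
    have hq : (0:ℝ) ≤ (2*a-12)*(x*(x^4 + x^2/4)) := by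
      apply mul_nonneg (by linarith)
      apply mul_nonneg (by linarith)
      positivity
    have h57 : (9/16)*x^3 ≤ x^5 := by nlinarith [mul_le_mul_of_nonneg_left hx2 (by linarith : (0:ℝ) ≤ x^3)]
    have hxx : x/2 ≤ x^3 := by nlinarith
    have hp : 4*x^3 + x/2 - 2*a*x*(x^4 + x^2/4) ≤ 0 := by nlinarith
    exact mul_nonpos_of_nonpos_of_nonneg hp he.le


/-- Mean value theorem bound for hf -/
lemma hf_gap_le {a s t : ℝ} (ha : 6 ≤ a) (hs : 1 ≤ s) (hst : s < t) :
    hf a s - hf a t ≤ (t-s) * (2*a* phi a s) := by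
  obtain ⟨ξ, hmem, heq⟩ := exists_hasDerivAt_eq_slope (hf a) (hder a) hst
    ((hf_cont a).continuousOn) (fun x _ => hf_deriv a x)
  have hξ1 : s < ξ := hmem.1
  have heq2 : hf a t - hf a s = (t-s) * hder a ξ := by
    rw [heq]
    rw [mul_div_assoc', mul_comm, mul_div_assoc, div_self (by linarith : t - s ≠ 0), mul_one]
  have hbound : -(hder a ξ) ≤ 2*a* phi a ξ := by
    unfold hder phi
    have he : (0:ℝ) < Real.exp (-(a*ξ^2)) := Real.exp_pos _
    have h3 : (0:ℝ) ≤ 3*ξ^2 - 1/4 := by nlinarith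
    nlinarith
  have hphi : phi a ξ ≤ phi a s := phi_antitoneOn ha (mem_Ici.2 hs)
    (mem_Ici.2 (by linarith)) (le_of_lt hξ1)
  have ha0 : (0:ℝ) ≤ 2*a := by linarith
  have hts : (0:ℝ) < t - s := by linarith
  nlinarith [mul_le_mul_of_nonneg_left hphi ha0]

/-- Mean value theorem bound for kf -/
lemma kf_gap_le {a s t : ℝ} (ha : 6 ≤ a) (hs : 3/4 ≤ s) (hst : s < t) :
    kf a s - kf a t ≤ (t-s) * (2*a* psi a s) := by
  obtain ⟨ξ, hmem, heq⟩ := exists_hasDerivAt_eq_slope (kf a) (kder a) hst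
    ((kf_cont a).continuousOn) (fun x _ => kf_deriv a x)
  have hξ1 : s < ξ := hmem.1
  have heq2 : kf a t - kf a s = (t-s) * kder a ξ := by
    rw [heq]
    rw [mul_div_assoc', mul_comm, mul_div_assoc, div_self (by linarith : t - s ≠ 0), mul_one]
  have hbound : -(kder a ξ) ≤ 2*a* psi a ξ := by
    unfold kder psi
    have he : (0:ℝ) < Real.exp (-(a*ξ^2)) := Real.exp_pos _
    have h3 : (0:ℝ) ≤ 3*ξ^2 + 1/4 := by positivity
    nlinarith
  have hpsi : psi a ξ ≤ psi a s := psi_antitoneOn ha (mem_Ici.2 hs)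
    (mem_Ici.2 (by linarith)) (le_of_lt hξ1)
  have ha0 : (0:ℝ) ≤ 2*a := by linarith
  have hts : (0:ℝ) < t - s := by linarith
  nlinarith [mul_le_mul_of_nonneg_left hpsi ha0]

lemma hasSum_telescope {c : ℕ → ℝ} (hc : Summable c) :
    HasSum (fun m => c m - c (m+1)) (c 0) := by
  have hc1 : Summable (fun m => c (m+1)) := (summable_nat_add_iff 1).2 hc
  have hs : Summable (fun m => c m - c (m+1)) := hc.sub hc1
  have hlim : Tendsto (fun N => ∑ i ∈ Finset.range N, (c i - c (i+1))) atTop (nhds (c 0)) := by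
    have hps : (fun N => ∑ i ∈ Finset.range N, (c i - c (i+1))) = fun N => c 0 - c N := by
      funext N; exact Finset.sum_range_sub' c N
    rw [hps]
    simpa using tendsto_const_nhds.sub hc.tendsto_atTop_zero
  have h2 := hs.hasSum.tendsto_sum_nat
  have heq := tendsto_nhds_unique h2 hlim
  rw [← heq]; exact hs.hasSum

lemma abs_hf_le (a u : ℝ) : |hf a u| ≤ (1+u^2)^2 * Real.exp (-(a*u^2)) := by
  unfold hf
  rw [abs_mul, Real.abs_exp]
  apply mul_le_mul_of_nonneg_right ?_ (Real.exp_pos _).le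
  rw [abs_le]
  constructor <;> nlinarith [sq_nonneg u, sq_nonneg (u-1), sq_nonneg (u+1), sq_nonneg (u^2-1), abs_nonneg u, sq_abs u, le_abs_self u, neg_abs_le u]

lemma abs_kf_le (a u : ℝ) : |kf a u| ≤ (1+u^2)^2 * Real.exp (-(a*u^2)) := by
  unfold kf
  rw [abs_mul, Real.abs_exp]
  apply mul_le_mul_of_nonneg_right ?_ (Real.exp_pos _).le
  rw [abs_le]
  constructor <;> nlinarith [sq_nonneg u, sq_nonneg (u-1), sq_nonneg (u+1), sq_nonneg (u^2-1), abs_nonneg u, sq_abs u, le_abs_self u, neg_abs_le u]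

lemma abs_lin_le (a u : ℝ) : |u * Real.exp (-(a*u^2))| ≤ (1+u^2)^2 * Real.exp (-(a*u^2)) := by
  rw [abs_mul, Real.abs_exp]
  apply mul_le_mul_of_nonneg_right ?_ (Real.exp_pos _).le
  rw [abs_le]
  constructor <;> nlinarith [sq_nonneg u, sq_nonneg (u-1), sq_nonneg (u+1), le_abs_self u, neg_abs_le u, abs_nonneg u]

lemma abs_cub_le (a u : ℝ) : |u^3 * Real.exp (-(a*u^2))| ≤ (1+u^2)^2 * Real.exp (-(a*u^2)) := by
  rw [abs_mul, Real.abs_exp]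
  apply mul_le_mul_of_nonneg_right ?_ (Real.exp_pos _).le
  rw [abs_le]
  constructor <;> nlinarith [sq_nonneg u, sq_nonneg (u-1), sq_nonneg (u+1), sq_nonneg (u^2-1), le_abs_self u, neg_abs_le u, abs_nonneg u, sq_abs u]

lemma abs_phi_le (a u : ℝ) : |phi a u| ≤ (1+u^2)^2 * Real.exp (-(a*u^2)) := by
  unfold phi
  rw [abs_mul, Real.abs_exp]
  apply mul_le_mul_of_nonneg_right ?_ (Real.exp_pos _).le
  rw [abs_le]
  constructor <;> nlinarith [sq_nonneg u, sq_nonneg (u^2-1), sq_nonneg (u^2)]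

lemma abs_psi_le (a u : ℝ) : |psi a u| ≤ (1+u^2)^2 * Real.exp (-(a*u^2)) := by
  unfold psi
  rw [abs_mul, Real.abs_exp]
  apply mul_le_mul_of_nonneg_right ?_ (Real.exp_pos _).le
  rw [abs_le]
  constructor <;> nlinarith [sq_nonneg u, sq_nonneg (u^2-1), sq_nonneg (u^2)]



lemma exp1_pow (n : ℕ) : Real.exp (n : ℝ) = (Real.exp 1)^n := by
  rw [← Real.exp_nat_mul]; norm_num

lemma exp2_gt : (7.389:ℝ) < Real.exp 2 := by
  have h := Real.exp_one_gt_d9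
  have : Real.exp (2:ℝ) = (Real.exp 1)^(2:ℕ) := by rw [← Real.exp_nat_mul]; norm_num
  rw [this]; nlinarith [Real.exp_pos 1]

lemma exp3_gt : (20.085:ℝ) < Real.exp 3 := by
  have h := Real.exp_one_gt_d9
  have : Real.exp (3:ℝ) = (Real.exp 1)^(3:ℕ) := by rw [← Real.exp_nat_mul]; norm_num
  rw [this]; nlinarith [Real.exp_pos 1, pow_pos (Real.exp_pos 1) 2]

lemma exp4_gt : (54.598:ℝ) < Real.exp 4 := by
  have h := Real.exp_one_gt_d9
  have : Real.exp (4:ℝ) = (Real.exp 1)^(4:ℕ) := by rw [← Real.exp_nat_mul]; norm_num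
  rw [this]; nlinarith [Real.exp_pos 1, pow_pos (Real.exp_pos 1) 2, pow_pos (Real.exp_pos 1) 3]

lemma exp5_gt' : (148.41 : ℝ) < Real.exp 5 := by
  have h := Real.exp_one_gt_d9
  have h5 : Real.exp (5:ℝ) = (Real.exp 1)^(5:ℕ) := by rw [← Real.exp_nat_mul]; norm_num
  rw [h5]
  nlinarith [Real.exp_pos 1, pow_pos (Real.exp_pos 1) 2, pow_pos (Real.exp_pos 1) 3,
    pow_pos (Real.exp_pos 1) 4]

-- exp(4.71) ≥ 105.37
lemma exp_471 : (105.37:ℝ) ≤ Real.exp (471/100) := by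
  have h1 : Real.exp (471/100) = Real.exp 5 * Real.exp (-(29/100)) := by
    rw [← Real.exp_add]; norm_num
  have h2 : (71/100:ℝ) ≤ Real.exp (-(29/100)) := by
    have := Real.add_one_le_exp (-(29/100):ℝ); linarith
  rw [h1]
  nlinarith [exp5_gt', Real.exp_pos (-(29/100):ℝ)]

-- exp(5.49) ≥ 221.13
lemma exp_549 : (221.13:ℝ) ≤ Real.exp (549/100) := by
  have h1 : Real.exp (549/100) = Real.exp 5 * Real.exp (49/100) := by
    rw [← Real.exp_add]; norm_num
  have h2 : (149/100:ℝ) ≤ Real.exp (49/100) := by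
    have := Real.add_one_le_exp ((49/100):ℝ); linarith
  rw [h1]
  nlinarith [exp5_gt', Real.exp_pos ((49/100):ℝ)]

-- exp(3.9) ≥ 49.13
lemma exp_39 : (49.13:ℝ) ≤ Real.exp (39/10) := by
  have h1 : Real.exp (39/10) = Real.exp 4 * Real.exp (-(1/10)) := by
    rw [← Real.exp_add]; norm_num
  have h2 : (9/10:ℝ) ≤ Real.exp (-(1/10)) := by
    have := Real.add_one_le_exp (-(1/10):ℝ); linarith
  rw [h1]
  nlinarith [exp4_gt, Real.exp_pos (-(1/10):ℝ)]

-- exp(3.14) ≥ 22.89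
lemma exp_314 : (22.89:ℝ) ≤ Real.exp (314/100) := by
  have h1 : Real.exp (314/100) = Real.exp 3 * Real.exp (14/100) := by
    rw [← Real.exp_add]; norm_num
  have h2 : (114/100:ℝ) ≤ Real.exp (14/100) := by
    have := Real.add_one_le_exp ((14/100):ℝ); linarith
  rw [h1]
  nlinarith [exp3_gt, Real.exp_pos ((14/100):ℝ)]

-- exp(2.35) ≥ 9.97
lemma exp_235 : (9.97:ℝ) ≤ Real.exp (235/100) := by
  have h1 : Real.exp (235/100) = Real.exp 2 * Real.exp (35/100) := by
    rw [← Real.exp_add]; norm_num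
  have h2 : (135/100:ℝ) ≤ Real.exp (35/100) := by
    have := Real.add_one_le_exp ((35/100):ℝ); linarith
  rw [h1]
  nlinarith [exp2_gt, Real.exp_pos ((35/100):ℝ)]

-- exp(1.57) ≥ 4.70
lemma exp_157 : (4.70:ℝ) ≤ Real.exp (157/100) := by
  have h := Real.sum_le_exp_of_nonneg (by norm_num : (0:ℝ) ≤ 157/100) 5
  have h2 : ∑ i ∈ Finset.range 5, ((157:ℝ)/100)^i / (Nat.factorial i) =
      1 + 157/100 + (157/100)^2/2 + (157/100)^3/6 + (157/100)^4/24 := by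
    simp [Finset.sum_range_succ, Nat.factorial]
  rw [h2] at h
  nlinarith [h]

-- exp 23 ≥ 1.9e9
lemma exp_23 : (1900000000:ℝ) ≤ Real.exp 23 := by
  have h1 : Real.exp (23:ℝ) = (Real.exp 5)^(4:ℕ) * Real.exp 3 := by
    rw [← Real.exp_nat_mul, ← Real.exp_add]; norm_num
  rw [h1]
  have h54 : (148.41:ℝ)^4 ≤ (Real.exp 5)^4 :=
    pow_le_pow_left₀ (by norm_num) exp5_gt'.le 4
  calc (1900000000:ℝ) ≤ (148.41:ℝ)^4 * 20.085 := by norm_num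
    _ ≤ (Real.exp 5)^(4:ℕ) * Real.exp 3 :=
        mul_le_mul h54 exp3_gt.le (by norm_num) (pow_nonneg (Real.exp_pos _).le 4)


lemma pi_facts : (3.141592:ℝ) < Real.pi ∧ Real.pi < 3.141593 :=
  ⟨Real.pi_gt_d6, Real.pi_lt_d6⟩

lemma numA {a : ℝ} (ha : 2*Real.pi ≤ a) :
    3*a*Real.exp (-(3/4*a)) + 68*a*Real.exp (-(15/4*a)) ≤ 3/16 := by
  obtain ⟨hπ, hπ'⟩ := pi_facts
  have h2π : (0:ℝ) < 2*π := by linarith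
  have d1 := mul_exp_decreasing h2π (by nlinarith : (1:ℝ) ≤ 3/4*(2*π)) ha
  have d2 := mul_exp_decreasing h2π (by nlinarith : (1:ℝ) ≤ 15/4*(2*π)) ha
  have e1 : Real.exp (-(3/4*(2*π))) ≤ 1/105.37 := by
    rw [Real.exp_neg]
    have h105 : (105.37:ℝ) ≤ Real.exp (3/4*(2*π)) :=
      exp_471.trans (Real.exp_le_exp.2 (by nlinarith))
    calc (Real.exp (3/4*(2*π)))⁻¹ ≤ (105.37:ℝ)⁻¹ :=
          inv_anti₀ (by norm_num) h105
      _ = 1/105.37 := by norm_num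
  have e2 : Real.exp (-(15/4*(2*π))) ≤ 1/1900000000 := by
    rw [Real.exp_neg]
    have h105 : (1900000000:ℝ) ≤ Real.exp (15/4*(2*π)) :=
      exp_23.trans (Real.exp_le_exp.2 (by nlinarith))
    calc (Real.exp (15/4*(2*π)))⁻¹ ≤ (1900000000:ℝ)⁻¹ :=
          inv_anti₀ (by norm_num) h105
      _ = 1/1900000000 := by norm_num
  have p1 : 3*a*Real.exp (-(3/4*a)) ≤ 6*π*(1/105.37) := by
    have := mul_le_mul_of_nonneg_left e1 h2π.le
    nlinarith [Real.exp_pos (-(3/4*(2*π)))]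
  have p2 : 68*a*Real.exp (-(15/4*a)) ≤ 136*π*(1/1900000000) := by
    have := mul_le_mul_of_nonneg_left e2 h2π.le
    nlinarith [Real.exp_pos (-(15/4*(2*π)))]
  nlinarith

lemma numB {a : ℝ} (ha : 2*Real.pi ≤ a) :
    16*a*Real.exp (-(7/8*a)) + 544*a*Real.exp (-(15/4*a)) ≤ 1 := by
  obtain ⟨hπ, hπ'⟩ := pi_facts
  have h2π : (0:ℝ) < 2*π := by linarith
  have d1 := mul_exp_decreasing h2π (by nlinarith : (1:ℝ) ≤ 7/8*(2*π)) ha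
  have d2 := mul_exp_decreasing h2π (by nlinarith : (1:ℝ) ≤ 15/4*(2*π)) ha
  have e1 : Real.exp (-(7/8*(2*π))) ≤ 1/221.13 := by
    rw [Real.exp_neg]
    have h105 : (221.13:ℝ) ≤ Real.exp (7/8*(2*π)) :=
      exp_549.trans (Real.exp_le_exp.2 (by nlinarith))
    calc (Real.exp (7/8*(2*π)))⁻¹ ≤ (221.13:ℝ)⁻¹ :=
          inv_anti₀ (by norm_num) h105
      _ = 1/221.13 := by norm_num
  have e2 : Real.exp (-(15/4*(2*π))) ≤ 1/1900000000 := by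
    rw [Real.exp_neg]
    have h105 : (1900000000:ℝ) ≤ Real.exp (15/4*(2*π)) :=
      exp_23.trans (Real.exp_le_exp.2 (by nlinarith))
    calc (Real.exp (15/4*(2*π)))⁻¹ ≤ (1900000000:ℝ)⁻¹ :=
          inv_anti₀ (by norm_num) h105
      _ = 1/1900000000 := by norm_num
  have p1 : 16*a*Real.exp (-(7/8*a)) ≤ 32*π*(1/221.13) := by
    have := mul_le_mul_of_nonneg_left e1 h2π.le
    nlinarith [Real.exp_pos (-(7/8*(2*π)))]
  have p2 : 544*a*Real.exp (-(15/4*a)) ≤ 1088*π*(1/1900000000) := by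
    have := mul_le_mul_of_nonneg_left e2 h2π.le
    nlinarith [Real.exp_pos (-(15/4*(2*π)))]
  nlinarith

lemma expc1 : (4335/65:ℝ) ≤ Real.exp (2*π*(3/4)) := by
  obtain ⟨hπ, _⟩ := pi_facts
  refine le_trans (by norm_num) (exp_471.trans (Real.exp_le_exp.2 (by nlinarith)))
lemma expc2 : (455/17:ℝ) ≤ Real.exp (2*π*(5/8)) := by
  obtain ⟨hπ, _⟩ := pi_facts
  refine le_trans (by norm_num) (exp_39.trans (Real.exp_le_exp.2 (by nlinarith)))
lemma expc3 : (3029/219:ℝ) ≤ Real.exp (2*π*(1/2)) := by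
  obtain ⟨hπ, _⟩ := pi_facts
  refine le_trans (by norm_num) (exp_314.trans (Real.exp_le_exp.2 (by nlinarith)))
lemma expc4 : (39/5:ℝ) ≤ Real.exp (2*π*(3/8)) := by
  obtain ⟨hπ, _⟩ := pi_facts
  refine le_trans (by norm_num) (exp_235.trans (Real.exp_le_exp.2 (by nlinarith)))
lemma expc5 : (2035/445:ℝ) ≤ Real.exp (2*π*(1/4)) := by
  obtain ⟨hπ, _⟩ := pi_facts
  refine le_trans (by norm_num) (exp_157.trans (Real.exp_le_exp.2 (by nlinarith)))

lemma exp_sq_le : Real.exp 2 ≤ 7.39 := by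
  have h := Real.exp_one_lt_d9
  have h2 : Real.exp (2:ℝ) = (Real.exp 1)^(2:ℕ) := by rw [← Real.exp_nat_mul]; norm_num
  rw [h2]; nlinarith [Real.exp_pos 1]

lemma S4_term_le (j : ℕ) :
    ((j:ℝ)+2)^4 * Real.exp (-(8*π*j)) ≤ 1892 * (Real.exp (-24))^j := by
  obtain ⟨hπ, _⟩ := pi_facts
  have h1 : ((j:ℝ)+2)^4 ≤ 256 * Real.exp ((j:ℝ)+2) := pow4_le_exp _ (by positivity)
  have h2 : Real.exp ((j:ℝ)+2) = Real.exp 2 * Real.exp (j:ℝ) := by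
    rw [← Real.exp_add]; ring_nf
  have h3 : ((j:ℝ)+2)^4 ≤ 1892 * Real.exp (j:ℝ) := by
    rw [h2] at h1
    nlinarith [Real.exp_pos ((j:ℝ)), exp_sq_le, Real.exp_pos (2:ℝ)]
  have h4 : Real.exp (j:ℝ) * Real.exp (-(8*π*j)) ≤ (Real.exp (-24))^j := by
    rw [← Real.exp_add, ← Real.exp_nat_mul]
    apply Real.exp_le_exp.2
    have : (0:ℝ) ≤ (j:ℝ) := Nat.cast_nonneg j
    nlinarith
  calc ((j:ℝ)+2)^4 * Real.exp (-(8*π*j)) ≤ (1892 * Real.exp (j:ℝ)) * Real.exp (-(8*π*j)) := by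
        apply mul_le_mul_of_nonneg_right h3 (Real.exp_pos _).le
    _ = 1892 * (Real.exp (j:ℝ) * Real.exp (-(8*π*j))) := by ring
    _ ≤ 1892 * (Real.exp (-24))^j := by nlinarith

lemma exp24_lt : Real.exp (-24:ℝ) < 1 := Real.exp_lt_one_iff.2 (by norm_num)

lemma S4_summable : Summable (fun j:ℕ => ((j:ℝ)+2)^4 * Real.exp (-(8*π*j))) := by
  apply Summable.of_nonneg_of_le (fun j => by positivity) S4_term_le
  exact (summable_geometric_of_lt_one (Real.exp_pos _).le exp24_lt).mul_left 1892

lemma exp23_inv : Real.exp (-23:ℝ) ≤ 1/1900000000 := by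
  rw [Real.exp_neg]
  calc (Real.exp (23:ℝ))⁻¹ ≤ (1900000000:ℝ)⁻¹ := inv_anti₀ (by norm_num) exp_23
    _ = 1/1900000000 := by norm_num

lemma S4_le : ∑' j:ℕ, ((j:ℝ)+2)^4 * Real.exp (-(8*π*j)) ≤ 17 := by
  rw [Summable.tsum_eq_zero_add S4_summable]
  have hf0 : (((0:ℕ):ℝ)+2)^4 * Real.exp (-(8*π*(0:ℕ))) = 16 := by norm_num
  have hgeom : Summable (fun j:ℕ => (1892*Real.exp (-24)) * (Real.exp (-24))^j) :=
    (summable_geometric_of_lt_one (Real.exp_pos _).le exp24_lt).mul_left _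
  have hterm : ∀ j:ℕ, ((((j+1:ℕ)):ℝ)+2)^4 * Real.exp (-(8*π*((j+1:ℕ):ℕ)))
      ≤ (1892*Real.exp (-24)) * (Real.exp (-24))^j := by
    intro j
    calc ((((j+1:ℕ)):ℝ)+2)^4 * Real.exp (-(8*π*((j+1:ℕ):ℕ)))
        ≤ 1892 * (Real.exp (-24))^(j+1) := S4_term_le (j+1)
      _ = (1892*Real.exp (-24)) * (Real.exp (-24))^j := by rw [pow_succ]; ring
  have hle : ∑' j:ℕ, ((((j+1:ℕ)):ℝ)+2)^4 * Real.exp (-(8*π*((j+1:ℕ):ℕ))) ≤ 1 := by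
    have h1 := Summable.tsum_le_tsum hterm ((summable_nat_add_iff 1).2 S4_summable) hgeom
    have h2 : ∑' j:ℕ, (1892*Real.exp (-24)) * (Real.exp (-24))^j
        = (1892*Real.exp (-24)) * (1-Real.exp (-24))⁻¹ := by
      rw [tsum_mul_left, tsum_geometric_of_lt_one (Real.exp_pos _).le exp24_lt]
    have h3 : Real.exp (-24:ℝ) ≤ 1/1900000000 := by
      refine le_trans (Real.exp_le_exp.2 (by norm_num)) exp23_inv
    have h4 : (1-Real.exp (-24:ℝ))⁻¹ ≤ 2 := by
      rw [inv_le_iff_one_le_mul₀ (by nlinarith [Real.exp_pos (-24:ℝ)])]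
      nlinarith [Real.exp_pos (-24:ℝ)]
    have h5 : (1892*Real.exp (-24:ℝ)) * (1-Real.exp (-24:ℝ))⁻¹ ≤ 1 := by
      have hp1 : (0:ℝ) < 1892*Real.exp (-24:ℝ) := by positivity
      have hp2 : (0:ℝ) ≤ (1-Real.exp (-24:ℝ))⁻¹ := by
        apply inv_nonneg.2; nlinarith [Real.exp_pos (-24:ℝ)]
      calc (1892*Real.exp (-24:ℝ)) * (1-Real.exp (-24:ℝ))⁻¹
          ≤ (1892*(1/1900000000)) * 2 := by
            apply mul_le_mul (by nlinarith) h4 hp2 (by norm_num)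
        _ ≤ 1 := by norm_num
    linarith [h1, h2 ▸ h1]
  rw [hf0]; linarith [hle]


lemma summable_shape {a : ℝ} (d : ℝ) (ha : 6 ≤ a) (g : ℝ → ℝ)
    (hg : ∀ u, |g u| ≤ (1+u^2)^2 * Real.exp (-(a*u^2))) :
    Summable (fun m:ℕ => g ((m:ℝ)+d)) := by
  apply summable_of_dom d ha
  intro m; unfold dom; exact hg _

lemma summable_shape_neg {a : ℝ} (d : ℝ) (ha : 6 ≤ a) (g : ℝ → ℝ)
    (hg : ∀ u, |g u| ≤ (1+u^2)^2 * Real.exp (-(a*u^2))) :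
    Summable (fun m:ℕ => g (-((m:ℝ)+d))) := by
  apply summable_of_dom d ha
  intro m; unfold dom
  have := hg (-((m:ℝ)+d))
  have heq : (-((m:ℝ)+d))^2 = ((m:ℝ)+d)^2 := by ring
  rwa [heq] at this

lemma summable_int_shape {a : ℝ} (Y : ℝ) (ha : 6 ≤ a) (g : ℝ → ℝ)
    (hg : ∀ u, |g u| ≤ (1+u^2)^2 * Real.exp (-(a*u^2))) :
    Summable (fun n:ℤ => g ((n:ℝ)-Y)) := by
  apply Summable.of_nat_of_neg
  · apply (summable_shape (-Y) ha g hg).congr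
    intro m; push_cast; ring_nf
  · apply (summable_shape_neg Y ha g hg).congr
    intro m; push_cast; ring_nf

lemma tsum_int_pair {a : ℝ} (Y : ℝ) (ha : 6 ≤ a) (g : ℝ → ℝ)
    (hg : ∀ u, |g u| ≤ (1+u^2)^2 * Real.exp (-(a*u^2))) :
    ∑' n:ℤ, g ((n:ℝ)-Y) = ∑' m:ℕ, (g (-((m:ℝ)+Y)) + g ((m:ℝ)+(1-Y))) := by
  have hsum := summable_int_shape Y ha g hg
  set f : ℤ → ℝ := fun n => g ((n:ℝ)-Y) with hfdef
  have hF : Summable (fun n:ℤ => f (-n)) := by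
    have : (fun n:ℤ => f (-n)) = f ∘ (Equiv.neg ℤ) := rfl
    rw [this, Equiv.summable_iff]; exact hsum
  have h1 : ∑' n:ℤ, f (-n) = ∑' n:ℤ, f n := by
    have : (fun n:ℤ => f (-n)) = fun n:ℤ => f ((Equiv.neg ℤ) n) := rfl
    rw [this]; exact (Equiv.neg ℤ).tsum_eq f
  have h2 := tsum_nat_add_neg_add_one hF
  rw [← h1, ← h2]
  apply tsum_congr
  intro m
  have e1 : f (-(m:ℤ)) = g (-((m:ℝ)+Y)) := by
    rw [hfdef]; push_cast; ring_nf
  have e2 : f (-(-((m:ℤ)+1))) = g ((m:ℝ)+(1-Y)) := by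
    rw [hfdef]; push_cast; ring_nf
  rw [e1, e2]

lemma hf_odd (a u : ℝ) : hf a (-u) = -(hf a u) := by
  unfold hf; have : (-u)^2 = u^2 := by ring
  rw [this]; ring

lemma kf_odd (a u : ℝ) : kf a (-u) = -(kf a u) := by
  unfold kf; have : (-u)^2 = u^2 := by ring
  rw [this]; ring

lemma tailA {a : ℝ} (ha : 2*π ≤ a) : ∑' j:ℕ, phi a ((j:ℝ)+2) ≤ 17 * Real.exp (-(4*a)) := by
  obtain ⟨hπ, _⟩ := pi_facts
  have ha6 : (6:ℝ) ≤ a := by nlinarith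
  have hterm : ∀ j:ℕ, phi a ((j:ℝ)+2) ≤ Real.exp (-(4*a)) * (((j:ℝ)+2)^4 * Real.exp (-(8*π*j))) := by
    intro j
    have hj : (0:ℝ) ≤ (j:ℝ) := Nat.cast_nonneg j
    have hexp : Real.exp (-(a*((j:ℝ)+2)^2)) ≤ Real.exp (-(4*a)) * Real.exp (-(8*π*j)) := by
      rw [← Real.exp_add]
      apply Real.exp_le_exp.2
      nlinarith [sq_nonneg (j:ℝ)]
    unfold phi
    have hpoly : ((j:ℝ)+2)^2*(((j:ℝ)+2)^2-1/4) ≤ ((j:ℝ)+2)^4 := by nlinarith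
    have h4 : (4:ℝ) ≤ ((j:ℝ)+2)^2 := by nlinarith [sq_nonneg (j:ℝ), hj]
    have h1 : (0:ℝ) ≤ ((j:ℝ)+2)^2*(((j:ℝ)+2)^2-1/4) :=
      mul_nonneg (sq_nonneg _) (by nlinarith [h4])
    calc ((j:ℝ)+2)^2*(((j:ℝ)+2)^2-1/4) * Real.exp (-(a*((j:ℝ)+2)^2))
        ≤ ((j:ℝ)+2)^4 * (Real.exp (-(4*a)) * Real.exp (-(8*π*j))) := by
          apply mul_le_mul hpoly hexp (Real.exp_pos _).le (by positivity)
      _ = Real.exp (-(4*a)) * (((j:ℝ)+2)^4 * Real.exp (-(8*π*j))) := by ring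
  have hs1 : Summable (fun j:ℕ => phi a ((j:ℝ)+2)) := summable_shape 2 ha6 _ (abs_phi_le a)
  have hs2 : Summable (fun j:ℕ => Real.exp (-(4*a)) * (((j:ℝ)+2)^4 * Real.exp (-(8*π*j)))) :=
    S4_summable.mul_left _
  calc ∑' j:ℕ, phi a ((j:ℝ)+2)
      ≤ ∑' j:ℕ, Real.exp (-(4*a)) * (((j:ℝ)+2)^4 * Real.exp (-(8*π*j))) :=
        Summable.tsum_le_tsum hterm hs1 hs2
    _ = Real.exp (-(4*a)) * ∑' j:ℕ, ((j:ℝ)+2)^4 * Real.exp (-(8*π*j)) := tsum_mul_left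
    _ ≤ Real.exp (-(4*a)) * 17 := by
        apply mul_le_mul_of_nonneg_left S4_le (Real.exp_pos _).le
    _ = 17 * Real.exp (-(4*a)) := by ring

lemma tailB {a : ℝ} (ha : 2*π ≤ a) :
    ∑' j:ℕ, psi a ((j:ℝ)+(1+15/16)) ≤ 34 * Real.exp (-(961/256*a)) := by
  obtain ⟨hπ, _⟩ := pi_facts
  have ha6 : (6:ℝ) ≤ a := by nlinarith
  have hterm : ∀ j:ℕ, psi a ((j:ℝ)+(1+15/16))
      ≤ (2*Real.exp (-(961/256*a))) * (((j:ℝ)+2)^4 * Real.exp (-(8*π*j))) := by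
    intro j
    have hj : (0:ℝ) ≤ (j:ℝ) := Nat.cast_nonneg j
    have hj2 : (j:ℝ) ≤ 8*(j:ℝ)^2 ∨ (j:ℝ) = 0 := by
      rcases Nat.eq_zero_or_pos j with h | h
      · right; exact_mod_cast h
      · left
        have : (1:ℝ) ≤ (j:ℝ) := by exact_mod_cast h
        nlinarith
    have hexp : Real.exp (-(a*((j:ℝ)+(1+15/16))^2))
        ≤ Real.exp (-(961/256*a)) * Real.exp (-(8*π*j)) := by
      rw [← Real.exp_add]
      apply Real.exp_le_exp.2
      rcases hj2 with h | h
      · nlinarith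
      · rw [h]; nlinarith
    unfold psi
    have hpoly : ((j:ℝ)+(1+15/16))^2*(((j:ℝ)+(1+15/16))^2+1/4) ≤ 2*((j:ℝ)+2)^4 := by
      nlinarith [sq_nonneg ((j:ℝ)+(1+15/16))]
    have h1 : (0:ℝ) ≤ ((j:ℝ)+(1+15/16))^2*(((j:ℝ)+(1+15/16))^2+1/4) := by positivity
    calc ((j:ℝ)+(1+15/16))^2*(((j:ℝ)+(1+15/16))^2+1/4) * Real.exp (-(a*((j:ℝ)+(1+15/16))^2))
        ≤ (2*((j:ℝ)+2)^4) * (Real.exp (-(961/256*a)) * Real.exp (-(8*π*j))) := by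
          apply mul_le_mul hpoly hexp (Real.exp_pos _).le (by positivity)
      _ = (2*Real.exp (-(961/256*a))) * (((j:ℝ)+2)^4 * Real.exp (-(8*π*j))) := by ring
  have hs1 : Summable (fun j:ℕ => psi a ((j:ℝ)+(1+15/16))) :=
    summable_shape (1+15/16) ha6 _ (abs_psi_le a)
  have hs2 : Summable (fun j:ℕ => (2*Real.exp (-(961/256*a))) * (((j:ℝ)+2)^4 * Real.exp (-(8*π*j)))) :=
    S4_summable.mul_left _
  calc ∑' j:ℕ, psi a ((j:ℝ)+(1+15/16))
      ≤ ∑' j:ℕ, (2*Real.exp (-(961/256*a))) * (((j:ℝ)+2)^4 * Real.exp (-(8*π*j))) :=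
        Summable.tsum_le_tsum hterm hs1 hs2
    _ = (2*Real.exp (-(961/256*a))) * ∑' j:ℕ, ((j:ℝ)+2)^4 * Real.exp (-(8*π*j)) := tsum_mul_left
    _ ≤ (2*Real.exp (-(961/256*a))) * 17 := by
        apply mul_le_mul_of_nonneg_left S4_le (by positivity)
    _ = 34 * Real.exp (-(961/256*a)) := by ring

lemma polyA1  {Y : ℝ} (hπ : (3.141592:ℝ) < π) (hY0 : 0 < Y) (hc : Y ≤ 1/4) :
    (1+Y)^3 - (1+Y)/4 ≤ ((1-Y)^3 - (1-Y)/4) * (1+4*π*Y)^2 := by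
  have h34 : (3/4:ℝ) ≤ 1-Y := by linarith
  have hsq : (9/16:ℝ) ≤ (1-Y)^2 := by nlinarith
  have hPm : (0:ℝ) ≤ (1-Y)^3 - (1-Y)/4 := by nlinarith
  have hlin : (1+4*3.141592*Y)^2 ≤ (1+4*π*Y)^2 := by
    nlinarith [mul_pos hY0 hY0, mul_nonneg hY0.le (by linarith : (0:ℝ) ≤ π - 3.141592),
      mul_nonneg (mul_nonneg hY0.le hY0.le) (by linarith : (0:ℝ) ≤ π - 3.141592)]
  have hrat : (1+Y)^3 - (1+Y)/4 ≤ ((1-Y)^3 - (1-Y)/4) * (1+4*3.141592*Y)^2 := by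
    nlinarith [mul_pos hY0 hY0, sq_nonneg Y, mul_nonneg (mul_nonneg hY0.le hY0.le) hY0.le,
      mul_nonneg (mul_nonneg (mul_nonneg hY0.le hY0.le) hY0.le) hY0.le,
      mul_nonneg hY0.le (by linarith : (0:ℝ) ≤ 1/4 - Y)]
  calc (1+Y)^3 - (1+Y)/4 ≤ ((1-Y)^3 - (1-Y)/4) * (1+4*3.141592*Y)^2 := hrat
    _ ≤ ((1-Y)^3 - (1-Y)/4) * (1+4*π*Y)^2 := mul_le_mul_of_nonneg_left hlin hPm


lemma polyB1f  {Y : ℝ} (hπ : (3.141592:ℝ) < π) (h38 : 3/8 ≤ Y) (hY : Y < 1/2) :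
    (1-Y)*((1-Y)^2+1/4) ≤ Y*(Y^2+1/4) * (1+π*(1-2*Y))^2 := by
  have hD : (0:ℝ) ≤ Y*(Y^2+1/4) := by nlinarith
  have hδ : (0:ℝ) ≤ 1-2*Y := by linarith
  have hlin : (1+3.141592*(1-2*Y))^2 ≤ (1+π*(1-2*Y))^2 := by
    nlinarith [sq_nonneg (1-2*Y), mul_nonneg hδ (by linarith : (0:ℝ) ≤ π - 3.141592),
      mul_nonneg (mul_nonneg hδ hδ) (by linarith : (0:ℝ) ≤ π - 3.141592)]
  have hrat : (1-Y)*((1-Y)^2+1/4) ≤ Y*(Y^2+1/4) * (1+3.141592*(1-2*Y))^2 := by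
    nlinarith [sq_nonneg (1-2*Y), mul_nonneg hδ (sq_nonneg (1-2*Y)),
      mul_nonneg (mul_nonneg hδ hδ) (sq_nonneg (1-2*Y)),
      mul_nonneg (by linarith : (0:ℝ) ≤ Y-3/8) (sq_nonneg (1-2*Y)),
      mul_nonneg (mul_nonneg (by linarith : (0:ℝ) ≤ Y-3/8) hδ) hδ]
  calc (1-Y)*((1-Y)^2+1/4) ≤ Y*(Y^2+1/4) * (1+3.141592*(1-2*Y))^2 := hrat
    _ ≤ Y*(Y^2+1/4) * (1+π*(1-2*Y))^2 := mul_le_mul_of_nonneg_left hlin hD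

lemma hfY_nonpos {a Y : ℝ} (hY0 : 0 ≤ Y) (hY : Y ≤ 1/2) : hf a Y ≤ 0 := by
  unfold hf
  apply mul_nonpos_of_nonpos_of_nonneg ?_ (Real.exp_pos _).le
  have h2 : Y^2 ≤ 1/4 := by nlinarith
  nlinarith [mul_le_mul_of_nonneg_left h2 hY0]

lemma hf_nonneg_ge {a Y : ℝ} (h1 : 1/2 ≤ Y) : 0 ≤ hf a Y := by
  unfold hf
  apply mul_nonneg ?_ (Real.exp_pos _).le
  have h2 : (1/4:ℝ) ≤ Y^2 := by nlinarith
  nlinarith [mul_le_mul_of_nonneg_left h2 (by linarith : (0:ℝ) ≤ Y)]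

lemma hf1Y_le {a Y : ℝ} (ha : 2*π ≤ a) (hY0 : 0 < Y) (hc : Y ≤ 1/4) :
    hf a (1+Y) ≤ hf a (1-Y) := by
  obtain ⟨hπ, _⟩ := pi_facts
  have hpoly := polyA1 hπ hY0 hc
  have h34 : (3/4:ℝ) ≤ 1-Y := by linarith
  have hsq : (9/16:ℝ) ≤ (1-Y)^2 := by nlinarith
  have hPm : (0:ℝ) ≤ (1-Y)^3 - (1-Y)/4 := by nlinarith
  have hexp2 : Real.exp (-(a*(1+Y)^2)) * (1+4*π*Y)^2 ≤ Real.exp (-(a*(1-Y)^2)) := by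
    have h2 : 1+4*π*Y ≤ Real.exp (4*π*Y) := by linarith [Real.add_one_le_exp (4*π*Y)]
    have h2' : (0:ℝ) ≤ 1+4*π*Y := by nlinarith [mul_pos (by linarith : (0:ℝ) < 4*π) hY0]
    have h1 : (1+4*π*Y)^2 ≤ Real.exp (8*π*Y) := by
      have h3 : Real.exp (8*π*Y) = (Real.exp (4*π*Y))^2 := by
        rw [sq, ← Real.exp_add]; ring_nf
      rw [h3]
      exact pow_le_pow_left₀ h2' h2 2
    calc Real.exp (-(a*(1+Y)^2)) * (1+4*π*Y)^2
        ≤ Real.exp (-(a*(1+Y)^2)) * Real.exp (8*π*Y) := by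
          apply mul_le_mul_of_nonneg_left h1 (Real.exp_pos _).le
      _ = Real.exp (-(a*(1+Y)^2) + 8*π*Y) := by rw [← Real.exp_add]
      _ ≤ Real.exp (-(a*(1-Y)^2)) := by
          apply Real.exp_le_exp.2
          nlinarith [mul_nonneg (by linarith : (0:ℝ) ≤ a - 2*π) hY0.le]
  unfold hf
  calc ((1+Y)^3 - (1+Y)/4) * Real.exp (-(a*(1+Y)^2))
      ≤ (((1-Y)^3 - (1-Y)/4) * (1+4*π*Y)^2) * Real.exp (-(a*(1+Y)^2)) := by
        apply mul_le_mul_of_nonneg_right hpoly (Real.exp_pos _).le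
    _ = ((1-Y)^3 - (1-Y)/4) * (Real.exp (-(a*(1+Y)^2)) * (1+4*π*Y)^2) := by ring
    _ ≤ ((1-Y)^3 - (1-Y)/4) * Real.exp (-(a*(1-Y)^2)) :=
        mul_le_mul_of_nonneg_left hexp2 hPm

lemma claimA {a Y : ℝ} (ha : 2*π ≤ a) (hY0 : 0 < Y) (hY : Y < 1/2) :
    0 ≤ ∑' n:ℤ, hf a ((n:ℝ)-Y) := by
  obtain ⟨hπ, hπ'⟩ := pi_facts
  have ha6 : (6:ℝ) ≤ a := by nlinarith
  rw [tsum_int_pair Y ha6 (hf a) (abs_hf_le a)]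
  have hpair : (fun m:ℕ => hf a (-((m:ℝ)+Y)) + hf a ((m:ℝ)+(1-Y)))
      = fun m:ℕ => hf a ((m:ℝ)+(1-Y)) - hf a ((m:ℝ)+Y) := by
    funext m; rw [hf_odd]; ring
  rw [hpair]
  have hsu : Summable (fun m:ℕ => hf a ((m:ℝ)+(1-Y))) := summable_shape _ ha6 _ (abs_hf_le a)
  have hsv : Summable (fun m:ℕ => hf a ((m:ℝ)+Y)) := summable_shape _ ha6 _ (abs_hf_le a)
  have hsw : Summable (fun m:ℕ => hf a ((m:ℝ)+(1-Y)) - hf a ((m:ℝ)+Y)) := hsu.sub hsv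
  rw [Summable.tsum_eq_zero_add hsw]
  have hshift : (fun m:ℕ => hf a ((((m+1:ℕ)):ℝ)+(1-Y)) - hf a ((((m+1:ℕ)):ℝ)+Y))
      = fun m:ℕ => hf a ((m:ℝ)+(2-Y)) - hf a ((m:ℝ)+(1+Y)) := by
    funext m
    rw [show ((((m+1:ℕ)):ℝ)+(1-Y)) = (m:ℝ)+(2-Y) by push_cast; ring,
        show ((((m+1:ℕ)):ℝ)+Y) = (m:ℝ)+(1+Y) by push_cast; ring]
  rw [hshift]
  have hzero : ((0:ℕ):ℝ) = 0 := by norm_num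
  rw [show (((0:ℕ)):ℝ)+(1-Y) = 1-Y by push_cast; ring,
      show (((0:ℕ)):ℝ)+Y = Y by push_cast; ring]
  have hsw2 : Summable (fun m:ℕ => hf a ((m:ℝ)+(2-Y)) - hf a ((m:ℝ)+(1+Y))) :=
    (summable_shape _ ha6 _ (abs_hf_le a)).sub (summable_shape _ ha6 _ (abs_hf_le a))
  rcases le_or_gt Y (1/4) with hc | hc
  · -- Case A1: telescope bound, tail ≥ -hf(1+Y)
    have hc0 : Summable (fun m:ℕ => hf a ((m:ℝ)+(1+Y))) := summable_shape _ ha6 _ (abs_hf_le a)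
    have htel := hasSum_telescope hc0
    have hge : ∀ m:ℕ, -(hf a ((m:ℝ)+(1+Y)) - hf a ((((m+1:ℕ)):ℝ)+(1+Y)))
        ≤ hf a ((m:ℝ)+(2-Y)) - hf a ((m:ℝ)+(1+Y)) := by
      intro m
      have key : hf a ((((m+1:ℕ)):ℝ)+(1+Y)) ≤ hf a ((m:ℝ)+(2-Y)) := by
        rw [show ((((m+1:ℕ)):ℝ)+(1+Y)) = (m:ℝ)+(2+Y) by push_cast; ring]
        apply hf_antitone ha6 (mem_Ici.2 ?_) (mem_Ici.2 ?_) ?_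
        · have : (0:ℝ) ≤ (m:ℝ) := Nat.cast_nonneg m; nlinarith
        · have : (0:ℝ) ≤ (m:ℝ) := Nat.cast_nonneg m; nlinarith
        · linarith
      linarith
    have hlhs_sum : Summable (fun m:ℕ => -(hf a ((m:ℝ)+(1+Y)) - hf a ((((m+1:ℕ)):ℝ)+(1+Y)))) :=
      htel.summable.neg
    have hts := Summable.tsum_le_tsum hge hlhs_sum hsw2
    have htsl : ∑' m:ℕ, -(hf a ((m:ℝ)+(1+Y)) - hf a ((((m+1:ℕ)):ℝ)+(1+Y)))
        = -(hf a (((0:ℕ):ℝ)+(1+Y))) := htel.neg.tsum_eq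
    rw [htsl] at hts
    rw [show (((0:ℕ)):ℝ)+(1+Y) = 1+Y by push_cast; ring] at hts
    have h1 := hf1Y_le ha hY0 hc
    have h2 := hfY_nonpos (a := a) hY0.le (by linarith : Y ≤ 1/2)
    linarith
  · -- Case A2: MVT bound
    have hge : ∀ m:ℕ, -((1-2*Y) * (2*a*phi a ((m:ℝ)+1)))
        ≤ hf a ((m:ℝ)+(2-Y)) - hf a ((m:ℝ)+(1+Y)) := by
      intro m
      have hm0 : (0:ℝ) ≤ (m:ℝ) := Nat.cast_nonneg m
      have hgap := hf_gap_le ha6 (by nlinarith : (1:ℝ) ≤ (m:ℝ)+(1+Y))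
        (by nlinarith : (m:ℝ)+(1+Y) < (m:ℝ)+(2-Y))
      have hφ : phi a ((m:ℝ)+(1+Y)) ≤ phi a ((m:ℝ)+1) :=
        phi_antitoneOn ha6 (mem_Ici.2 (by nlinarith)) (mem_Ici.2 (by nlinarith)) (by nlinarith)
      have heq : ((m:ℝ)+(2-Y)) - ((m:ℝ)+(1+Y)) = 1-2*Y := by ring
      rw [heq] at hgap
      have h2a : (0:ℝ) ≤ 2*a*(1-2*Y) := by nlinarith
      nlinarith [mul_le_mul_of_nonneg_left hφ (by nlinarith : (0:ℝ) ≤ (1-2*Y)*(2*a))]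
    have hφsum : Summable (fun m:ℕ => phi a ((m:ℝ)+1)) := summable_shape _ ha6 _ (abs_phi_le a)
    have hlhs_sum : Summable (fun m:ℕ => -((1-2*Y) * (2*a*phi a ((m:ℝ)+1)))) := by
      apply Summable.neg
      have := (hφsum.mul_left ((1-2*Y)*(2*a)))
      apply this.congr; intro m; ring
    have hts := Summable.tsum_le_tsum hge hlhs_sum hsw2
    -- evaluate lhs tsum
    have htsl : ∑' m:ℕ, -((1-2*Y) * (2*a*phi a ((m:ℝ)+1)))
        = -((1-2*Y) * (2*a* ∑' m:ℕ, phi a ((m:ℝ)+1))) := by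
      have h1 : ∀ m:ℕ, -((1-2*Y) * (2*a*phi a ((m:ℝ)+1))) = ((1-2*Y)*(2*a)) * (-(phi a ((m:ℝ)+1))) := by
        intro m; ring
      calc ∑' m:ℕ, -((1-2*Y) * (2*a*phi a ((m:ℝ)+1)))
          = ∑' m:ℕ, ((1-2*Y)*(2*a)) * (-(phi a ((m:ℝ)+1))) := tsum_congr h1
        _ = ((1-2*Y)*(2*a)) * ∑' m:ℕ, (-(phi a ((m:ℝ)+1))) := tsum_mul_left
        _ = ((1-2*Y)*(2*a)) * -(∑' m:ℕ, phi a ((m:ℝ)+1)) := by rw [tsum_neg]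
        _ = -((1-2*Y) * (2*a* ∑' m:ℕ, phi a ((m:ℝ)+1))) := by ring
    rw [htsl] at hts
    -- bound the phi sum
    have hφb : ∑' m:ℕ, phi a ((m:ℝ)+1) ≤ (3/4)*Real.exp (-a) + 17*Real.exp (-(4*a)) := by
      rw [Summable.tsum_eq_zero_add hφsum]
      have h0 : phi a (((0:ℕ):ℝ)+1) = (3/4)*Real.exp (-a) := by
        rw [show (((0:ℕ)):ℝ)+1 = 1 by norm_num]
        unfold phi; norm_num
      have hsh : (fun m:ℕ => phi a ((((m+1:ℕ)):ℝ)+1)) = fun m:ℕ => phi a ((m:ℝ)+2) := by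
        funext m
        rw [show ((((m+1:ℕ)):ℝ)+1) = (m:ℝ)+2 by push_cast; ring]
      rw [h0, hsh]
      linarith [tailA ha]
    -- gain bound
    have hgain : (3/16)*(1/2-Y)*Real.exp (-(a*(1/4))) ≤ hf a (1-Y) - hf a Y := by
      have h1 : 0 ≤ hf a (1-Y) := hf_nonneg_ge (by linarith)
      have h2 : (3/16)*(1/2-Y)*Real.exp (-(a*(1/4))) ≤ -(hf a Y) := by
        unfold hf
        have hpe : Real.exp (-(a*(1/4))) ≤ Real.exp (-(a*Y^2)) := by
          apply Real.exp_le_exp.2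
          nlinarith [mul_nonneg (by linarith : (0:ℝ) ≤ a) (by nlinarith : (0:ℝ) ≤ 1/4 - Y^2)]
        have hg1 : (0:ℝ) ≤ 1/2 - Y := by linarith
        have hg2 : (0:ℝ) ≤ Y*(1/2+Y) - 3/16 := by nlinarith
        have hpoly : (3/16)*(1/2-Y) ≤ Y/4 - Y^3 := by nlinarith [mul_nonneg hg1 hg2]
        have hpp : (0:ℝ) ≤ Y/4 - Y^3 := by nlinarith [mul_nonneg hg1 (by linarith : (0:ℝ) ≤ Y+1/2), mul_nonneg (mul_nonneg hg1 (by linarith : (0:ℝ) ≤ Y+1/2)) hY0.le]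
        calc (3/16)*(1/2-Y)*Real.exp (-(a*(1/4)))
            ≤ (Y/4 - Y^3)*Real.exp (-(a*Y^2)) := by
              apply mul_le_mul hpoly hpe (Real.exp_pos _).le hpp
          _ = -((Y^3 - Y/4) * Real.exp (-(a*Y^2))) := by ring
      linarith
    -- numeric assembly
    have hnum : (1-2*Y) * (2*a*((3/4)*Real.exp (-a) + 17*Real.exp (-(4*a))))
        ≤ (3/16)*(1/2-Y)*Real.exp (-(a*(1/4))) := by
      have hsplit1 : Real.exp (-a) = Real.exp (-(a*(1/4))) * Real.exp (-(3/4*a)) := by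
        rw [← Real.exp_add]; ring_nf
      have hsplit2 : Real.exp (-(4*a)) = Real.exp (-(a*(1/4))) * Real.exp (-(15/4*a)) := by
        rw [← Real.exp_add]; ring_nf
      have hnumA := numA ha
      have hE : (0:ℝ) < Real.exp (-(a*(1/4))) := Real.exp_pos _
      have h12 : (0:ℝ) ≤ 1-2*Y := by linarith
      calc (1-2*Y) * (2*a*((3/4)*Real.exp (-a) + 17*Real.exp (-(4*a))))
          = (1-2*Y)*Real.exp (-(a*(1/4))) * ((3/2)*(a*Real.exp (-(3/4*a))) + 34*(a*Real.exp (-(15/4*a)))) := by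
            rw [hsplit1, hsplit2]; ring
        _ ≤ (1-2*Y)*Real.exp (-(a*(1/4))) * (3/32) := by
            apply mul_le_mul_of_nonneg_left (by linarith) (mul_nonneg h12 hE.le)
        _ = (3/16)*(1/2-Y)*Real.exp (-(a*(1/4))) := by ring
    have hloss : -((1-2*Y) * (2*a* ∑' m:ℕ, phi a ((m:ℝ)+1)))
        ≥ -((1-2*Y) * (2*a*((3/4)*Real.exp (-a) + 17*Real.exp (-(4*a))))) := by
      have h12 : (0:ℝ) ≤ (1-2*Y)*(2*a) := by nlinarith
      nlinarith [mul_le_mul_of_nonneg_left hφb h12]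
    linarith


lemma cube_mono {x y : ℝ} (h : x ≤ y) : x^3+x/4 ≤ y^3+y/4 := by
  nlinarith [sq_nonneg (x+y), sq_nonneg (x-y)]

lemma kf_nonneg {a u : ℝ} (hu : 0 ≤ u) : 0 ≤ kf a u := by
  unfold kf
  apply mul_nonneg ?_ (Real.exp_pos _).le
  nlinarith [pow_nonneg hu 3]

lemma kfB1_aux {a Y l r : ℝ} (ha : 2*π ≤ a) (hl : l ≤ Y) (hr : Y ≤ r) (hl0 : 0 < l)
    (hr2 : r ≤ 1/2)
    (hkey : ((1-l)^3+(1-l)/4) ≤ (l^3+l/4) * Real.exp (2*π*(1-2*r))) :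
    kf a (1-Y) ≤ kf a Y := by
  obtain ⟨hπ, _⟩ := pi_facts
  have hY2 : Y ≤ 1/2 := le_trans hr hr2
  have hNle : (1-Y)^3+(1-Y)/4 ≤ (1-l)^3+(1-l)/4 := cube_mono (by linarith)
  have hDge : l^3+l/4 ≤ Y^3+Y/4 := cube_mono hl
  have hN0 : (0:ℝ) ≤ (1-Y)^3+(1-Y)/4 := by nlinarith [pow_nonneg (by linarith : (0:ℝ) ≤ 1-Y) 3]
  have hexpsplit : Real.exp (-(a*(1-Y)^2)) = Real.exp (-(a*Y^2)) * Real.exp (-(a*(1-2*Y))) := by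
    rw [← Real.exp_add]; ring_nf
  have hexple : Real.exp (-(a*(1-2*Y))) * Real.exp (2*π*(1-2*r)) ≤ 1 := by
    rw [← Real.exp_add]
    apply Real.exp_le_one_iff.2
    have h1 : 2*π*(1-2*r) ≤ 2*π*(1-2*Y) := by nlinarith
    have h2 : 2*π*(1-2*Y) ≤ a*(1-2*Y) := by nlinarith
    linarith
  unfold kf
  have hE : (0:ℝ) < Real.exp (-(a*Y^2)) := Real.exp_pos _
  calc ((1-Y)^3+(1-Y)/4) * Real.exp (-(a*(1-Y)^2))
      ≤ ((1-l)^3+(1-l)/4) * Real.exp (-(a*(1-Y)^2)) :=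
        mul_le_mul_of_nonneg_right hNle (Real.exp_pos _).le
    _ ≤ ((l^3+l/4) * Real.exp (2*π*(1-2*r))) * Real.exp (-(a*(1-Y)^2)) :=
        mul_le_mul_of_nonneg_right hkey (Real.exp_pos _).le
    _ = (l^3+l/4) * Real.exp (-(a*Y^2)) * (Real.exp (-(a*(1-2*Y))) * Real.exp (2*π*(1-2*r))) := by
        rw [hexpsplit]; ring
    _ ≤ (l^3+l/4) * Real.exp (-(a*Y^2)) * 1 := by
        apply mul_le_mul_of_nonneg_left hexple
        apply mul_nonneg (by nlinarith [pow_nonneg hl0.le 3]) hE.le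
    _ = (l^3+l/4) * Real.exp (-(a*Y^2)) := by ring
    _ ≤ (Y^3+Y/4) * Real.exp (-(a*Y^2)) := mul_le_mul_of_nonneg_right hDge hE.le

lemma kfB1 {a Y : ℝ} (ha : 2*π ≤ a) (hY16 : 1/16 ≤ Y) (hY : Y < 1/2) :
    kf a (1-Y) ≤ kf a Y := by
  obtain ⟨hπ, _⟩ := pi_facts
  rcases le_or_gt Y (1/8) with h1 | h1
  · apply kfB1_aux (l := 1/16) (r := 1/8) ha hY16 h1 (by norm_num) (by norm_num)
    have h := expc1
    rw [show (2*π*(3/4)) = 2*π*(1-2*(1/8:ℝ)) by norm_num] at h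
    nlinarith [Real.exp_pos (2*π*(1-2*(1/8:ℝ)))]
  rcases le_or_gt Y (3/16) with h2 | h2
  · apply kfB1_aux (l := 1/8) (r := 3/16) ha h1.le h2 (by norm_num) (by norm_num)
    have h := expc2
    rw [show (2*π*(5/8)) = 2*π*(1-2*(3/16:ℝ)) by norm_num] at h
    nlinarith [Real.exp_pos (2*π*(1-2*(3/16:ℝ)))]
  rcases le_or_gt Y (1/4) with h3 | h3
  · apply kfB1_aux (l := 3/16) (r := 1/4) ha h2.le h3 (by norm_num) (by norm_num)
    have h := expc3
    rw [show (2*π*(1/2)) = 2*π*(1-2*(1/4:ℝ)) by norm_num] at h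
    nlinarith [Real.exp_pos (2*π*(1-2*(1/4:ℝ)))]
  rcases le_or_gt Y (5/16) with h4 | h4
  · apply kfB1_aux (l := 1/4) (r := 5/16) ha h3.le h4 (by norm_num) (by norm_num)
    have h := expc4
    rw [show (2*π*(3/8)) = 2*π*(1-2*(5/16:ℝ)) by norm_num] at h
    nlinarith [Real.exp_pos (2*π*(1-2*(5/16:ℝ)))]
  rcases le_or_gt Y (3/8) with h5 | h5
  · apply kfB1_aux (l := 5/16) (r := 3/8) ha h4.le h5 (by norm_num) (by norm_num)
    have h := expc5
    rw [show (2*π*(1/4)) = 2*π*(1-2*(3/8:ℝ)) by norm_num] at h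
    nlinarith [Real.exp_pos (2*π*(1-2*(3/8:ℝ)))]
  · -- polynomial regime Y ∈ (3/8, 1/2)
    have hpoly := polyB1f hπ h5.le hY
    have hδ : (0:ℝ) ≤ 1-2*Y := by linarith
    have hexp1 : (1+π*(1-2*Y))^2 ≤ Real.exp (a*(1-2*Y)) := by
      have hp : (0:ℝ) ≤ 1+π*(1-2*Y) := by nlinarith
      have h6 : 1+π*(1-2*Y) ≤ Real.exp (π*(1-2*Y)) := by
        linarith [Real.add_one_le_exp (π*(1-2*Y))]
      calc (1+π*(1-2*Y))^2 ≤ (Real.exp (π*(1-2*Y)))^2 := pow_le_pow_left₀ hp h6 2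
        _ = Real.exp (2*π*(1-2*Y)) := by rw [sq, ← Real.exp_add]; ring_nf
        _ ≤ Real.exp (a*(1-2*Y)) := by
            apply Real.exp_le_exp.2; nlinarith
    have hexpsplit : Real.exp (-(a*(1-Y)^2)) = Real.exp (-(a*Y^2)) * Real.exp (-(a*(1-2*Y))) := by
      rw [← Real.exp_add]; ring_nf
    have hE : (0:ℝ) < Real.exp (-(a*Y^2)) := Real.exp_pos _
    have hD0 : (0:ℝ) ≤ Y^3+Y/4 := by nlinarith
    unfold kf
    have hN : (1-Y)^3+(1-Y)/4 = (1-Y)*((1-Y)^2+1/4) := by ring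
    have hD : Y^3+Y/4 = Y*(Y^2+1/4) := by ring
    calc ((1-Y)^3+(1-Y)/4) * Real.exp (-(a*(1-Y)^2))
        ≤ ((Y^3+Y/4) * (1+π*(1-2*Y))^2) * Real.exp (-(a*(1-Y)^2)) := by
          apply mul_le_mul_of_nonneg_right ?_ (Real.exp_pos _).le
          rw [hN, hD]; exact hpoly
      _ ≤ ((Y^3+Y/4) * Real.exp (a*(1-2*Y))) * Real.exp (-(a*(1-Y)^2)) := by
          apply mul_le_mul_of_nonneg_right ?_ (Real.exp_pos _).le
          exact mul_le_mul_of_nonneg_left hexp1 hD0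
      _ = (Y^3+Y/4) * Real.exp (-(a*Y^2)) * (Real.exp (a*(1-2*Y)) * Real.exp (-(a*(1-2*Y)))) := by
          rw [hexpsplit]; ring
      _ = (Y^3+Y/4) * Real.exp (-(a*Y^2)) := by
          rw [← Real.exp_add]; norm_num


lemma claimB {a Y : ℝ} (ha : 2*π ≤ a) (hY0 : 0 < Y) (hY : Y < 1/2) :
    ∑' n:ℤ, kf a ((n:ℝ)-Y) ≤ 0 := by
  obtain ⟨hπ, hπ'⟩ := pi_facts
  have ha6 : (6:ℝ) ≤ a := by nlinarith
  rw [tsum_int_pair Y ha6 (kf a) (abs_kf_le a)]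
  have hpair : (fun m:ℕ => kf a (-((m:ℝ)+Y)) + kf a ((m:ℝ)+(1-Y)))
      = fun m:ℕ => -(kf a ((m:ℝ)+Y) - kf a ((m:ℝ)+(1-Y))) := by
    funext m; rw [kf_odd]; ring
  rw [hpair, tsum_neg, neg_nonpos]
  have hsu : Summable (fun m:ℕ => kf a ((m:ℝ)+Y)) := summable_shape _ ha6 _ (abs_kf_le a)
  have hsv : Summable (fun m:ℕ => kf a ((m:ℝ)+(1-Y))) := summable_shape _ ha6 _ (abs_kf_le a)
  have hsw : Summable (fun m:ℕ => kf a ((m:ℝ)+Y) - kf a ((m:ℝ)+(1-Y))) := hsu.sub hsv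
  have hterm : ∀ m:ℕ, 0 ≤ kf a ((m:ℝ)+(1+Y)) - kf a ((m:ℝ)+(2-Y)) := by
    intro m
    have hm0 : (0:ℝ) ≤ (m:ℝ) := Nat.cast_nonneg m
    have := kf_antitone ha6 (mem_Ici.2 (by nlinarith : (3/4:ℝ) ≤ (m:ℝ)+(1+Y)))
      (mem_Ici.2 (by nlinarith : (3/4:ℝ) ≤ (m:ℝ)+(2-Y))) (by nlinarith)
    linarith
  rcases le_or_gt (1/16 : ℝ) Y with hc | hc
  · -- B1: every paired term nonneg
    apply tsum_nonneg
    intro m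
    rcases m with _ | n
    · rw [show (((0:ℕ)):ℝ)+Y = Y by push_cast; ring,
          show (((0:ℕ)):ℝ)+(1-Y) = 1-Y by push_cast; ring]
      linarith [kfB1 ha hc hY]
    · rw [show ((((n+1:ℕ)):ℝ)+Y) = (n:ℝ)+(1+Y) by push_cast; ring,
          show ((((n+1:ℕ)):ℝ)+(1-Y)) = (n:ℝ)+(2-Y) by push_cast; ring]
      exact hterm n
  · -- B2: Y < 1/16
    rw [Summable.tsum_eq_zero_add hsw]
    have hshift : (fun m:ℕ => kf a ((((m+1:ℕ)):ℝ)+Y) - kf a ((((m+1:ℕ)):ℝ)+(1-Y)))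
        = fun m:ℕ => kf a ((m:ℝ)+(1+Y)) - kf a ((m:ℝ)+(2-Y)) := by
      funext m
      rw [show ((((m+1:ℕ)):ℝ)+Y) = (m:ℝ)+(1+Y) by push_cast; ring,
          show ((((m+1:ℕ)):ℝ)+(1-Y)) = (m:ℝ)+(2-Y) by push_cast; ring]
    rw [hshift, show (((0:ℕ)):ℝ)+Y = Y by push_cast; ring,
        show (((0:ℕ)):ℝ)+(1-Y) = 1-Y by push_cast; ring]
    have hc0 : Summable (fun m:ℕ => kf a ((m:ℝ)+(1+Y))) := summable_shape _ ha6 _ (abs_kf_le a)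
    have htel := hasSum_telescope hc0
    have hψsum : Summable (fun m:ℕ => psi a ((m:ℝ)+(1+15/16))) :=
      summable_shape _ ha6 _ (abs_psi_le a)
    have hdle : ∀ m:ℕ, kf a ((m:ℝ)+(2-Y)) - kf a ((m:ℝ)+(2+Y))
        ≤ (2*Y)*(2*a*psi a ((m:ℝ)+(1+15/16))) := by
      intro m
      have hm0 : (0:ℝ) ≤ (m:ℝ) := Nat.cast_nonneg m
      have hgap := kf_gap_le ha6 (by nlinarith : (3/4:ℝ) ≤ (m:ℝ)+(2-Y))
        (by nlinarith : (m:ℝ)+(2-Y) < (m:ℝ)+(2+Y))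
      have heq : ((m:ℝ)+(2+Y)) - ((m:ℝ)+(2-Y)) = 2*Y := by ring
      rw [heq] at hgap
      have hψ : psi a ((m:ℝ)+(2-Y)) ≤ psi a ((m:ℝ)+(1+15/16)) :=
        psi_antitoneOn ha6 (mem_Ici.2 (by nlinarith)) (mem_Ici.2 (by nlinarith)) (by nlinarith)
      have h2aY : (0:ℝ) ≤ 2*Y*(2*a) := by nlinarith
      nlinarith [mul_le_mul_of_nonneg_left hψ h2aY]
    have hsd : Summable (fun m:ℕ => kf a ((m:ℝ)+(2-Y)) - kf a ((m:ℝ)+(2+Y))) :=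
      (summable_shape _ ha6 _ (abs_kf_le a)).sub (summable_shape _ ha6 _ (abs_kf_le a))
    have hvid : ∀ m:ℕ, kf a ((m:ℝ)+(1+Y)) - kf a ((m:ℝ)+(2-Y))
        = (kf a ((m:ℝ)+(1+Y)) - kf a ((((m+1:ℕ)):ℝ)+(1+Y)))
          - (kf a ((m:ℝ)+(2-Y)) - kf a ((m:ℝ)+(2+Y))) := by
      intro m
      rw [show ((((m+1:ℕ)):ℝ)+(1+Y)) = (m:ℝ)+(2+Y) by push_cast; ring]
      ring
    have htsum_v : ∑' m:ℕ, (kf a ((m:ℝ)+(1+Y)) - kf a ((m:ℝ)+(2-Y)))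
        = kf a (((0:ℕ):ℝ)+(1+Y))
          - ∑' m:ℕ, (kf a ((m:ℝ)+(2-Y)) - kf a ((m:ℝ)+(2+Y))) := by
      calc ∑' m:ℕ, (kf a ((m:ℝ)+(1+Y)) - kf a ((m:ℝ)+(2-Y)))
          = ∑' m:ℕ, ((kf a ((m:ℝ)+(1+Y)) - kf a ((((m+1:ℕ)):ℝ)+(1+Y)))
              - (kf a ((m:ℝ)+(2-Y)) - kf a ((m:ℝ)+(2+Y)))) := tsum_congr hvid
        _ = (∑' m:ℕ, (kf a ((m:ℝ)+(1+Y)) - kf a ((((m+1:ℕ)):ℝ)+(1+Y))))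
              - ∑' m:ℕ, (kf a ((m:ℝ)+(2-Y)) - kf a ((m:ℝ)+(2+Y))) :=
            Summable.tsum_sub htel.summable hsd
        _ = kf a (((0:ℕ):ℝ)+(1+Y))
              - ∑' m:ℕ, (kf a ((m:ℝ)+(2-Y)) - kf a ((m:ℝ)+(2+Y))) := by rw [htel.tsum_eq]
    rw [htsum_v, show (((0:ℕ)):ℝ)+(1+Y) = 1+Y by push_cast; ring]
    -- bound the d-sum
    have hdsum : ∑' m:ℕ, (kf a ((m:ℝ)+(2-Y)) - kf a ((m:ℝ)+(2+Y)))
        ≤ (2*Y)*(2*a*(34 * Real.exp (-(961/256*a)))) := by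
      have h1 := Summable.tsum_le_tsum hdle hsd ((hψsum.mul_left (2*a)).mul_left (2*Y) |>.congr (fun m => by ring))
      have h2 : ∑' m:ℕ, (2*Y)*(2*a*psi a ((m:ℝ)+(1+15/16)))
          = (2*Y)*(2*a* ∑' m:ℕ, psi a ((m:ℝ)+(1+15/16))) := by
        calc ∑' m:ℕ, (2*Y)*(2*a*psi a ((m:ℝ)+(1+15/16)))
            = ∑' m:ℕ, ((2*Y)*(2*a))*(psi a ((m:ℝ)+(1+15/16))) := tsum_congr (fun m => by ring)
          _ = ((2*Y)*(2*a))*∑' m:ℕ, psi a ((m:ℝ)+(1+15/16)) := tsum_mul_left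
          _ = (2*Y)*(2*a* ∑' m:ℕ, psi a ((m:ℝ)+(1+15/16))) := by ring
      rw [h2] at h1
      have h3 := tailB ha
      have h4 : (0:ℝ) ≤ (2*Y)*(2*a) := by nlinarith
      nlinarith [mul_le_mul_of_nonneg_left h3 h4]
    -- gap at the first pair
    have hgap0 : kf a (1-Y) - kf a (1+Y) ≤ (2*Y)*(2*a*psi a (15/16)) := by
      have hgap := kf_gap_le ha6 (by nlinarith : (3/4:ℝ) ≤ 1-Y) (by nlinarith : (1-Y:ℝ) < 1+Y)
      have heq : ((1+Y):ℝ) - (1-Y) = 2*Y := by ring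
      rw [heq] at hgap
      have hψ : psi a (1-Y) ≤ psi a (15/16) :=
        psi_antitoneOn ha6 (mem_Ici.2 (by nlinarith)) (mem_Ici.2 (by nlinarith)) (by nlinarith)
      have h2aY : (0:ℝ) ≤ 2*Y*(2*a) := by nlinarith
      nlinarith [mul_le_mul_of_nonneg_left hψ h2aY]
    -- lower bound for kf Y
    have hkfY : (Y/4) * Real.exp (-(a*(1/256))) ≤ kf a Y := by
      unfold kf
      have he : Real.exp (-(a*(1/256))) ≤ Real.exp (-(a*Y^2)) := by
        apply Real.exp_le_exp.2
        nlinarith [mul_nonneg (by linarith : (0:ℝ) ≤ a) (by nlinarith : (0:ℝ) ≤ 1/256 - Y^2)]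
      calc (Y/4) * Real.exp (-(a*(1/256))) ≤ (Y/4) * Real.exp (-(a*Y^2)) := by
            apply mul_le_mul_of_nonneg_left he (by linarith)
        _ ≤ (Y^3+Y/4) * Real.exp (-(a*Y^2)) := by
            apply mul_le_mul_of_nonneg_right ?_ (Real.exp_pos _).le
            nlinarith [pow_nonneg hY0.le 3]
    -- bound psi(15/16)
    have hψb : psi a (15/16) ≤ Real.exp (-(a*(225/256))) := by
      unfold psi
      have harg : -(a*((15/16):ℝ)^2) = -(a*(225/256)) := by norm_num
      rw [harg]
      nlinarith [Real.exp_pos (-(a*(225/256)))]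
    -- final numeric assembly
    have hnum : (2*Y)*(2*a*Real.exp (-(a*(225/256)))) + (2*Y)*(2*a*(34 * Real.exp (-(961/256*a))))
        ≤ (Y/4) * Real.exp (-(a*(1/256))) := by
      have hs1 : Real.exp (-(a*(225/256))) = Real.exp (-(a*(1/256))) * Real.exp (-(7/8*a)) := by
        rw [← Real.exp_add]; ring_nf
      have hs2 : Real.exp (-(961/256*a)) = Real.exp (-(a*(1/256))) * Real.exp (-(15/4*a)) := by
        rw [← Real.exp_add]; ring_nf
      have hnumB := numB ha
      have hE : (0:ℝ) < Real.exp (-(a*(1/256))) := Real.exp_pos _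
      have hq : (0:ℝ) ≤ Y*Real.exp (-(a*(1/256))) := by positivity
      calc (2*Y)*(2*a*Real.exp (-(a*(225/256)))) + (2*Y)*(2*a*(34 * Real.exp (-(961/256*a))))
          = (Y*Real.exp (-(a*(1/256)))) * (4*(a*Real.exp (-(7/8*a))) + 136*(a*Real.exp (-(15/4*a)))) := by
            rw [hs1, hs2]; ring
        _ ≤ (Y*Real.exp (-(a*(1/256)))) * (1/4) := by
            apply mul_le_mul_of_nonneg_left (by linarith) hq
        _ = (Y/4) * Real.exp (-(a*(1/256))) := by ring
    have hψgap : (2*Y)*(2*a*psi a (15/16)) ≤ (2*Y)*(2*a*Real.exp (-(a*(225/256)))) := by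
      have h4 : (0:ℝ) ≤ (2*Y)*(2*a) := by nlinarith
      nlinarith [mul_le_mul_of_nonneg_left hψb h4]
    linarith


lemma core {a Y : ℝ} (ha : 2*π ≤ a) (hY0 : 0 < Y) (hY : Y < 1/2) :
    |∑' n:ℤ, ((n:ℝ)-Y)^3 * Real.exp (-(a*((n:ℝ)-Y)^2))|
      ≤ (1/4) * |∑' n:ℤ, ((n:ℝ)-Y) * Real.exp (-(a*((n:ℝ)-Y)^2))| := by
  obtain ⟨hπ, hπ'⟩ := pi_facts
  have ha6 : (6:ℝ) ≤ a := by nlinarith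
  have hcub : Summable (fun n:ℤ => ((n:ℝ)-Y)^3 * Real.exp (-(a*((n:ℝ)-Y)^2))) :=
    summable_int_shape Y ha6 (fun u => u^3 * Real.exp (-(a*u^2))) (abs_cub_le a)
  have hlin : Summable (fun n:ℤ => ((n:ℝ)-Y) * Real.exp (-(a*((n:ℝ)-Y)^2))) :=
    summable_int_shape Y ha6 (fun u => u * Real.exp (-(a*u^2))) (abs_lin_le a)
  set N := ∑' n:ℤ, ((n:ℝ)-Y)^3 * Real.exp (-(a*((n:ℝ)-Y)^2)) with hN
  set D := ∑' n:ℤ, ((n:ℝ)-Y) * Real.exp (-(a*((n:ℝ)-Y)^2)) with hD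
  have hA : ∑' n:ℤ, hf a ((n:ℝ)-Y) = N - (1/4)*D := by
    calc ∑' n:ℤ, hf a ((n:ℝ)-Y)
        = ∑' n:ℤ, (((n:ℝ)-Y)^3 * Real.exp (-(a*((n:ℝ)-Y)^2))
            - (1/4)*(((n:ℝ)-Y) * Real.exp (-(a*((n:ℝ)-Y)^2)))) := by
          apply tsum_congr; intro n; unfold hf; ring
      _ = N - ∑' n:ℤ, (1/4)*(((n:ℝ)-Y) * Real.exp (-(a*((n:ℝ)-Y)^2))) :=
          Summable.tsum_sub hcub (hlin.mul_left (1/4))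
      _ = N - (1/4)*D := by rw [tsum_mul_left]
  have hB : ∑' n:ℤ, kf a ((n:ℝ)-Y) = N + (1/4)*D := by
    calc ∑' n:ℤ, kf a ((n:ℝ)-Y)
        = ∑' n:ℤ, (((n:ℝ)-Y)^3 * Real.exp (-(a*((n:ℝ)-Y)^2))
            + (1/4)*(((n:ℝ)-Y) * Real.exp (-(a*((n:ℝ)-Y)^2)))) := by
          apply tsum_congr; intro n; unfold kf; ring
      _ = N + ∑' n:ℤ, (1/4)*(((n:ℝ)-Y) * Real.exp (-(a*((n:ℝ)-Y)^2))) :=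
          Summable.tsum_add hcub (hlin.mul_left (1/4))
      _ = N + (1/4)*D := by rw [tsum_mul_left]
  have hA0 := claimA ha hY0 hY
  have hB0 := claimB ha hY0 hY
  rw [hA] at hA0
  rw [hB] at hB0
  have hDneg : D ≤ 0 := by linarith
  have habsD : |D| = -D := abs_of_nonpos hDneg
  rw [habsD]
  rw [abs_le]
  constructor <;> linarith

lemma tsum_shift (g : ℝ → ℝ) (Y : ℝ) (k : ℤ) :
    ∑' n:ℤ, g ((n:ℝ)-(Y - (k:ℝ))) = ∑' n:ℤ, g ((n:ℝ)-Y) := by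
  have h := (Equiv.addRight k).tsum_eq (fun n:ℤ => g ((n:ℝ)-Y))
  rw [← h]
  apply tsum_congr; intro n
  have : ((Equiv.addRight k) n : ℤ) = n + k := rfl
  rw [this]
  congr 1; push_cast; ring

lemma tsum_reflect (g : ℝ → ℝ) (Z : ℝ) (hodd : ∀ u, g (-u) = -g u) :
    ∑' n:ℤ, g ((n:ℝ)-Z) = -∑' n:ℤ, g ((n:ℝ)-(1-Z)) := by
  set e : ℤ ≃ ℤ := (Equiv.neg ℤ).trans (Equiv.addRight 1) with he
  have h := e.tsum_eq (fun n:ℤ => g ((n:ℝ)-Z))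
  calc ∑' n:ℤ, g ((n:ℝ)-Z) = ∑' n:ℤ, g (((e n):ℝ)-Z) := h.symm
    _ = ∑' n:ℤ, -(g ((n:ℝ)-(1-Z))) := by
        apply tsum_congr; intro n
        have h1 : (e n : ℤ) = -n + 1 := rfl
        rw [h1]
        have h2 : ((( -n + 1 : ℤ)):ℝ) - Z = -((n:ℝ) - (1-Z)) := by push_cast; ring
        rw [h2, hodd]
    _ = -∑' n:ℤ, g ((n:ℝ)-(1-Z)) := tsum_neg

/-- vanishing at Z = 1/2 -/
lemma tsum_half_zero (g : ℝ → ℝ) (hodd : ∀ u, g (-u) = -g u) :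
    ∑' n:ℤ, g ((n:ℝ)-(1/2)) = 0 := by
  have h := tsum_reflect g (1/2) hodd
  have h2 : (1:ℝ) - 1/2 = 1/2 := by norm_num
  rw [h2] at h
  linarith

/-- vanishing at Z = 0 -/
lemma tsum_zero_zero (g : ℝ → ℝ) (hodd : ∀ u, g (-u) = -g u) :
    ∑' n:ℤ, g ((n:ℝ)-(0:ℝ)) = 0 := by
  have h := tsum_reflect g 0 hodd
  have h2 := tsum_shift g 1 1
  have h3 : (1:ℝ) - ((1:ℤ):ℝ) = 0 := by norm_num
  rw [h3] at h2
  have h4 : (1:ℝ) - 0 = 1 := by norm_num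
  rw [h4] at h
  -- h : Σ g(n-0) = -Σ g(n-1), h2 : Σ g(n-0) = Σ g(n-1)
  linarith [h, h2]

end CQB

open CQB in
theorem cubic_quotient_bound (X Y : ℝ) (hX0 : 0 < X) (hX : X ≤ 1/2)
    (hden : (∑' n : ℤ, ((n : ℝ) - Y) * Real.exp (-π * ((n : ℝ) - Y)^2 / X)) ≠ 0) :
    |∑' n : ℤ, ((n : ℝ) - Y)^3 * Real.exp (-π * ((n : ℝ) - Y)^2 / X)|
      ≤ (1/4) * |∑' n : ℤ, ((n : ℝ) - Y) * Real.exp (-π * ((n : ℝ) - Y)^2 / X)| := by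
  have hπ0 := Real.pi_pos
  set a : ℝ := π / X with haa
  have ha : 2*π ≤ a := by
    rw [haa, le_div_iff₀ hX0]
    nlinarith
  have ha6 : (6:ℝ) ≤ a := by nlinarith [pi_facts.1]
  -- convert exponent form
  set g3 : ℝ → ℝ := fun u => u^3 * Real.exp (-(a*u^2)) with hg3def
  set g1 : ℝ → ℝ := fun u => u * Real.exp (-(a*u^2)) with hg1def
  have hconv3 : ∀ W : ℝ, (∑' n : ℤ, ((n : ℝ) - W)^3 * Real.exp (-π * ((n : ℝ) - W)^2 / X))
      = ∑' n:ℤ, g3 ((n:ℝ)-W) := by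
    intro W; apply tsum_congr; intro n
    rw [hg3def]
    have : -π * ((n : ℝ) - W)^2 / X = -(a*((n:ℝ)-W)^2) := by
      rw [haa]; field_simp
    rw [this]
  have hconv1 : ∀ W : ℝ, (∑' n : ℤ, ((n : ℝ) - W) * Real.exp (-π * ((n : ℝ) - W)^2 / X))
      = ∑' n:ℤ, g1 ((n:ℝ)-W) := by
    intro W; apply tsum_congr; intro n
    rw [hg1def]
    have : -π * ((n : ℝ) - W)^2 / X = -(a*((n:ℝ)-W)^2) := by
      rw [haa]; field_simp
    rw [this]
  have hodd3 : ∀ u, g3 (-u) = -g3 u := by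
    intro u; rw [hg3def]
    have : (-u)^2 = u^2 := by ring
    simp only []
    rw [show (-u)^3 = -u^3 by ring, this]
    ring
  have hodd1 : ∀ u, g1 (-u) = -g1 u := by
    intro u; rw [hg1def]
    have : (-u)^2 = u^2 := by ring
    simp only []
    rw [this]
    ring
  rw [hconv3 Y, hconv1 Y]
  rw [hconv1 Y] at hden
  -- reduce to fractional part
  set Z : ℝ := Y - (⌊Y⌋:ℝ) with hZ
  have hshift3 : ∑' n:ℤ, g3 ((n:ℝ)-Z) = ∑' n:ℤ, g3 ((n:ℝ)-Y) := tsum_shift g3 Y ⌊Y⌋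
  have hshift1 : ∑' n:ℤ, g1 ((n:ℝ)-Z) = ∑' n:ℤ, g1 ((n:ℝ)-Y) := tsum_shift g1 Y ⌊Y⌋
  rw [← hshift3, ← hshift1]
  rw [← hshift1] at hden
  have hZ0 : 0 ≤ Z := by
    rw [hZ]; linarith [Int.floor_le Y]
  have hZ1 : Z < 1 := by
    rw [hZ]; linarith [Int.lt_floor_add_one Y]
  -- case analysis
  rcases eq_or_lt_of_le hZ0 with h0 | h0
  · exfalso; apply hden
    rw [← h0] at *
    exact tsum_zero_zero g1 hodd1
  rcases lt_trichotomy Z (1/2) with h2 | h2 | h2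
  · exact core ha h0 h2
  · exfalso; apply hden
    rw [h2]
    exact tsum_half_zero g1 hodd1
  · -- reflect
    have hW0 : 0 < 1 - Z := by linarith
    have hW2 : 1 - Z < 1/2 := by linarith
    have hr3 := tsum_reflect g3 Z hodd3
    have hr1 := tsum_reflect g1 Z hodd1
    rw [hr3, hr1, abs_neg, abs_neg]
    exact core ha hW0 hW2
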